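/- Let R be a ℂ-algebra, let α ∈ ℂ be nonzero, let k ≥ 1, and let x, y, z, w ∈ R satisfy x*y = y*x, x*z = z*x, x*w = w*x, y*z = z*y, y*w = w*y, and x*y = α·z^{2k}. Then for all nonnegative integers t, l and every EVEN nonnegative integer s, the element z^t * (x^l + (−1)^{t+l} * y^l) * w^s belongs to the ℂ-subalgebra of R generated by the four elements z², x − y, w², and z*(x+y). -/

import Mathlib

set_option maxHeartbeats 1000000

lemma comm_id_stmt7 {S : Type*} [CommRing S] (X Y Z : S) (t l : ℕ) :
    Z^t * (X^(l+2) + (-1:S)^(t+(l+2)) * Y^(l+2)) =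
      (X - Y) * (Z^t * (X^(l+1) + (-1:S)^(t+(l+1)) * Y^(l+1)))
      + (X*Y) * (Z^t * (X^l + (-1:S)^(t+l) * Y^l)) := by ring

lemma aux_id_stmt7 {R : Type*} [Ring R] [Algebra ℂ R] (x y z : R)
    (hxy : x*y = y*x) (hxz : x*z = z*x) (hyz : y*z = z*y) (t l : ℕ) :
    z^t * (x^(l+2) + (-1:R)^(t+(l+2)) * y^(l+2)) =
      (x - y) * (z^t * (x^(l+1) + (-1:R)^(t+(l+1)) * y^(l+1)))
      + (x*y) * (z^t * (x^l + (-1:R)^(t+l) * y^l)) := by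
  have hcomm : ∀ a ∈ ({x,y,z}:Set R), ∀ b ∈ ({x,y,z}:Set R), a*b=b*a := by
    rintro a (rfl|rfl|rfl) b (rfl|rfl|rfl) <;>
      first | rfl | assumption | (exact hxy.symm) | (exact hxz.symm) | (exact hyz.symm)
  letI : CommRing (Algebra.adjoin ℂ ({x,y,z}:Set R)) :=
    Algebra.adjoinCommRingOfComm ℂ hcomm
  have hx : x ∈ Algebra.adjoin ℂ ({x,y,z}:Set R) := Algebra.subset_adjoin (by simp)
  have hy : y ∈ Algebra.adjoin ℂ ({x,y,z}:Set R) := Algebra.subset_adjoin (by simp)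
  have hz : z ∈ Algebra.adjoin ℂ ({x,y,z}:Set R) := Algebra.subset_adjoin (by simp)
  have := congrArg Subtype.val
    (comm_id_stmt7 (⟨x,hx⟩ : Algebra.adjoin ℂ ({x,y,z}:Set R)) ⟨y,hy⟩ ⟨z,hz⟩ t l)
  simpa only [MulMemClass.coe_mul, AddMemClass.coe_add, SubmonoidClass.coe_pow, AddSubgroupClass.coe_sub, NegMemClass.coe_neg, OneMemClass.coe_one] using this

/-- Remark 1.6 of Ferraro–Kirkman–Moore–Won. -/
theorem stmt_7 {R : Type*} [Ring R] [Algebra ℂ R] (α : ℂ) (hα : α ≠ 0)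
    (k : ℕ) (hk : 1 ≤ k) (x y z w : R)
    (hxy : x * y = y * x) (hxz : x * z = z * x) (hxw : x * w = w * x)
    (hyz : y * z = z * y) (hyw : y * w = w * y)
    (hrel : x * y = α • z ^ (2 * k)) :
    ∀ t l s : ℕ, Even s →
      z ^ t * (x ^ l + (-1 : R) ^ (t + l) * y ^ l) * w ^ s ∈
        Algebra.adjoin ℂ ({z ^ 2, x - y, w ^ 2, z * (x + y)} : Set R) := by
  set A := Algebra.adjoin ℂ ({z ^ 2, x - y, w ^ 2, z * (x + y)} : Set R) with hA
  have hz2 : z ^ 2 ∈ A := Algebra.subset_adjoin (by simp)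
  have hxmy : x - y ∈ A := Algebra.subset_adjoin (by simp)
  have hw2 : w ^ 2 ∈ A := Algebra.subset_adjoin (by simp)
  have hzxy : z * (x + y) ∈ A := Algebra.subset_adjoin (by simp)
  -- powers of z with even exponent are in A
  have hzpow : ∀ m : ℕ, z ^ (m + m) ∈ A := by
    intro m
    have : z ^ (m + m) = (z ^ 2) ^ m := by rw [← two_mul, pow_mul]
    rw [this]; exact pow_mem hz2 m
  -- the main claim, without the w factor
  have main : ∀ l t : ℕ, z ^ t * (x ^ l + (-1 : R) ^ (t + l) * y ^ l) ∈ A := by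
    intro l
    induction l using Nat.strong_induction_on with
    | _ l ih =>
      match l with
      | 0 =>
        intro t
        rcases Nat.even_or_odd t with ⟨m, hm⟩ | ht
        · have hneg : (-1 : R) ^ (t + 0) = 1 := Even.neg_one_pow (by exact ⟨m, by omega⟩)
          rw [hneg]
          simp only [pow_zero, one_mul]
          subst hm
          exact mul_mem (hzpow m) (add_mem (one_mem A) (one_mem A))
        · have hneg : (-1 : R) ^ (t + 0) = -1 := Odd.neg_one_pow (by simpa using ht)
          rw [hneg]
          simp only [pow_zero]
          norm_num
      | 1 =>
        intro t
        rcases Nat.even_or_odd t with ⟨m, hm⟩ | ht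
        · have hneg : (-1 : R) ^ (t + 1) = -1 :=
            Odd.neg_one_pow (by exact ⟨m, by omega⟩)
          rw [hneg]
          have : x ^ 1 + -1 * y ^ 1 = x - y := by
            simp [sub_eq_add_neg]
          rw [this, hm]
          exact mul_mem (hzpow m) hxmy
        · obtain ⟨m, hm⟩ := ht
          have hneg : (-1 : R) ^ (t + 1) = 1 := Even.neg_one_pow (by exact ⟨m+1, by omega⟩)
          rw [hneg, hm]
          have : z ^ (2 * m + 1) * (x ^ 1 + 1 * y ^ 1) = z ^ (m + m) * (z * (x + y)) := by
            rw [pow_one, pow_one, one_mul, ← two_mul, pow_succ, mul_assoc]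
          rw [this]
          exact mul_mem (hzpow m) hzxy
      | (l + 2) =>
        intro t
        rw [aux_id_stmt7 x y z hxy hxz hyz t l]
        have hterm2 : (x*y) * (z^t * (x^l + (-1:R)^(t+l) * y^l)) =
            α • ((z ^ 2) ^ k * (z^t * (x^l + (-1:R)^(t+l) * y^l))) := by
          rw [hrel, smul_mul_assoc, pow_mul]
        rw [hterm2]
        exact add_mem (mul_mem hxmy (ih (l+1) (by omega) t))
          (Subalgebra.smul_mem A (mul_mem (pow_mem hz2 k) (ih l (by omega) t)) α)
  intro t l s hs
  obtain ⟨m, hm⟩ := hs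
  have hws : w ^ s ∈ A := by
    have : w ^ s = (w ^ 2) ^ m := by rw [hm, ← two_mul, pow_mul]
    rw [this]; exact pow_mem hw2 m
  exact mul_mem (main l t) hws
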